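/- Under the hypotheses of Lemma 1 (D_S > D_U − D_L + 2Υ₁, D₁, D₂ ∈ [D_L, D_U], D₁ + D₂ > D_S + 2Υ₂, 0 < δ < Υ = min{Υ₁, Υ₂}), the closed ball B(θ_T, δ) intersected with the upper half-plane is contained in the intersection of the two rings R(θᵢ, Dᵢ, δ) = {θ in the half-plane : Dᵢ − δ ≤ ‖θ − θᵢ‖ ≤ Dᵢ + δ}, i = 1,2, which in turn is contained in B(θ_T, Φ(δ)) with Φ(δ) = (2D_U + Υ)^{1/2} [(2D_U + Υ)/D_S (Υ/D_S + 1) + 2]^{1/2} √δ. -/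

import Mathlib

lemma norm_sq_two' (v : EuclideanSpace ℝ (Fin 2)) : ‖v‖ ^ 2 = (v 0) ^ 2 + (v 1) ^ 2 := by
  rw [EuclideanSpace.norm_eq, Real.sq_sqrt (by positivity)]
  simp [Fin.sum_univ_two, sq_abs]

lemma abs_le_of_sq' (a b : ℝ) (hb : 0 ≤ b) (h : a ^ 2 ≤ b ^ 2) : |a| ≤ b := by
  have := Real.sqrt_le_sqrt h
  rwa [Real.sqrt_sq_eq_abs, Real.sqrt_sq hb] at this

theorem ring_intersection_sandwich
    (DS DU DL Υ₁ Υ₂ δ D₁ D₂ : ℝ)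
    (θ₁ θ₂ θT : EuclideanSpace ℝ (Fin 2))
    (hθ₁0 : θ₁ 0 = 0) (hθ₁1 : θ₁ 1 = 0)
    (hθ₂0 : θ₂ 0 = DS) (hθ₂1 : θ₂ 1 = 0)
    (hDS : 0 < DS) (hΥ₁ : 0 < Υ₁) (hΥ₂ : 0 < Υ₂)
    (hyT : 0 < θT 1)
    (hD₁ : ‖θT - θ₁‖ = D₁) (hD₂ : ‖θT - θ₂‖ = D₂)
    (hD₁m : D₁ ∈ Set.Icc DL DU) (hD₂m : D₂ ∈ Set.Icc DL DU)
    (hsep : DS > DU - DL + 2 * Υ₁)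
    (hsum : D₁ + D₂ > DS + 2 * Υ₂)
    (hδpos : 0 < δ) (hδ : δ < min Υ₁ Υ₂) :
    (Metric.closedBall θT δ ∩ {θ : EuclideanSpace ℝ (Fin 2) | 0 < θ 1}) ⊆
        ({θ : EuclideanSpace ℝ (Fin 2) | 0 < θ 1 ∧ D₁ - δ ≤ ‖θ - θ₁‖ ∧ ‖θ - θ₁‖ ≤ D₁ + δ} ∩
          {θ : EuclideanSpace ℝ (Fin 2) | 0 < θ 1 ∧ D₂ - δ ≤ ‖θ - θ₂‖ ∧ ‖θ - θ₂‖ ≤ D₂ + δ}) ∧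
      ({θ : EuclideanSpace ℝ (Fin 2) | 0 < θ 1 ∧ D₁ - δ ≤ ‖θ - θ₁‖ ∧ ‖θ - θ₁‖ ≤ D₁ + δ} ∩
          {θ : EuclideanSpace ℝ (Fin 2) | 0 < θ 1 ∧ D₂ - δ ≤ ‖θ - θ₂‖ ∧ ‖θ - θ₂‖ ≤ D₂ + δ}) ⊆
        Metric.closedBall θT
          (Real.sqrt (2 * DU + min Υ₁ Υ₂) *
            Real.sqrt ((2 * DU + min Υ₁ Υ₂) / DS * (min Υ₁ Υ₂ / DS + 1) + 2) *
            Real.sqrt δ) := by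
  have hΥpos : 0 < min Υ₁ Υ₂ := lt_min hΥ₁ hΥ₂
  have hδΥ : δ ≤ min Υ₁ Υ₂ := hδ.le
  set Υ : ℝ := min Υ₁ Υ₂ with hΥdef
  constructor
  · rintro θ ⟨hball, hhalf⟩
    have hdist : ‖θ - θT‖ ≤ δ := by
      rw [Metric.mem_closedBall, dist_eq_norm] at hball; exact hball
    have key : ∀ (c : EuclideanSpace ℝ (Fin 2)) (D : ℝ), ‖θT - c‖ = D →
        D - δ ≤ ‖θ - c‖ ∧ ‖θ - c‖ ≤ D + δ := by
      intro c D hDc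
      have h : |‖θ - c‖ - D| ≤ δ := by
        rw [← hDc]
        calc |‖θ - c‖ - ‖θT - c‖| ≤ ‖(θ - c) - (θT - c)‖ := abs_norm_sub_norm_le _ _
          _ = ‖θ - θT‖ := by rw [sub_sub_sub_cancel_right]
          _ ≤ δ := hdist
      rw [abs_le] at h
      constructor <;> linarith [h.1, h.2]
    exact ⟨⟨hhalf, key θ₁ D₁ hD₁⟩, ⟨hhalf, key θ₂ D₂ hD₂⟩⟩
  · rintro θ ⟨⟨hy, h1l, h1u⟩, ⟨-, h2l, h2u⟩⟩
    have hsub : ∀ (a b : EuclideanSpace ℝ (Fin 2)) (i : Fin 2), (a - b) i = a i - b i :=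
      fun a b i => rfl
    set x := θ 0 with hxdef
    set yv := θ 1 with hyvdef
    set xT := θT 0 with hxTdef
    set yT := θT 1 with hyTdef
    set M : ℝ := 2 * DU + Υ with hMdef
    set r₁ : ℝ := ‖θ - θ₁‖ with hr₁def
    set r₂ : ℝ := ‖θ - θ₂‖ with hr₂def
    have hA : r₁ ^ 2 = x ^ 2 + yv ^ 2 := by
      rw [hr₁def, norm_sq_two']; simp [hsub, hθ₁0, hθ₁1, hxdef, hyvdef]
    have hB : r₂ ^ 2 = (x - DS) ^ 2 + yv ^ 2 := by
      rw [hr₂def, norm_sq_two']; simp [hsub, hθ₂0, hθ₂1, hxdef, hyvdef]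
    have hC : D₁ ^ 2 = xT ^ 2 + yT ^ 2 := by
      rw [← hD₁, norm_sq_two']; simp [hsub, hθ₁0, hθ₁1, hxTdef, hyTdef]
    have hD : D₂ ^ 2 = (xT - DS) ^ 2 + yT ^ 2 := by
      rw [← hD₂, norm_sq_two']; simp [hsub, hθ₂0, hθ₂1, hxTdef, hyTdef]
    have hr₁0 : 0 ≤ r₁ := norm_nonneg _
    have hr₂0 : 0 ≤ r₂ := norm_nonneg _
    have hD₁0 : 0 ≤ D₁ := hD₁ ▸ norm_nonneg _
    have hD₂0 : 0 ≤ D₂ := hD₂ ▸ norm_nonneg _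
    have hD₁pos : 0 < D₁ := by
      by_contra h
      push_neg at h
      have h0 : D₁ = 0 := le_antisymm h hD₁0
      have hyT2 : 0 < yT ^ 2 := pow_pos hyT 2
      have : (0:ℝ) < D₁ ^ 2 := by rw [hC]; have := sq_nonneg xT; linarith
      rw [h0] at this
      simp at this
    have hDU : 0 < DU := lt_of_lt_of_le hD₁pos hD₁m.2
    have hM0 : 0 < M := by rw [hMdef]; linarith
    -- bounds on r₁, r₂
    have hr₁u : r₁ ≤ DU + Υ := by linarith [hD₁m.2]
    have hr₂u : r₂ ≤ DU + Υ := by linarith [hD₂m.2]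
    -- |rᵢ² - Dᵢ²| ≤ δ * M
    have h1 : |r₁ ^ 2 - D₁ ^ 2| ≤ δ * M := by
      have e : r₁ ^ 2 - D₁ ^ 2 = (r₁ - D₁) * (r₁ + D₁) := by ring
      rw [e, abs_mul]
      have ha : |r₁ - D₁| ≤ δ := abs_le.mpr ⟨by linarith, by linarith⟩
      have hb : |r₁ + D₁| ≤ M := by
        rw [abs_of_nonneg (by linarith)]; rw [hMdef]; linarith [hD₁m.2]
      exact mul_le_mul ha hb (abs_nonneg _) hδpos.le
    have h2 : |r₂ ^ 2 - D₂ ^ 2| ≤ δ * M := by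
      have e : r₂ ^ 2 - D₂ ^ 2 = (r₂ - D₂) * (r₂ + D₂) := by ring
      rw [e, abs_mul]
      have ha : |r₂ - D₂| ≤ δ := abs_le.mpr ⟨by linarith, by linarith⟩
      have hb : |r₂ + D₂| ≤ M := by
        rw [abs_of_nonneg (by linarith)]; rw [hMdef]; linarith [hD₂m.2]
      exact mul_le_mul ha hb (abs_nonneg _) hδpos.le
    -- horizontal estimate
    have heq : 2 * DS * (x - xT) = (r₁ ^ 2 - D₁ ^ 2) - (r₂ ^ 2 - D₂ ^ 2) := by
      linear_combination hB - hA + hC - hD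
    have ht : |(r₁ ^ 2 - D₁ ^ 2) - (r₂ ^ 2 - D₂ ^ 2)| ≤ δ * M + δ * M := by
      rw [sub_eq_add_neg]
      exact (abs_add_le _ _).trans (by rw [abs_neg]; exact add_le_add h1 h2)
    have hx : |x - xT| ≤ δ * M / DS := by
      rw [le_div_iff₀ hDS]
      have h' : |2 * DS * (x - xT)| ≤ δ * M + δ * M := heq ▸ ht
      rw [abs_mul, abs_of_nonneg (by positivity : (0:ℝ) ≤ 2 * DS)] at h'
      linarith
    -- bounds |x| , |xT|
    have hxb : |x| ≤ DU + Υ := by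
      refine abs_le_of_sq' _ _ (by linarith) ?_
      have h1 : x ^ 2 ≤ r₁ ^ 2 := by have := sq_nonneg yv; linarith [hA]
      have h2 : r₁ ^ 2 ≤ (DU + Υ) ^ 2 := pow_le_pow_left₀ hr₁0 hr₁u 2
      linarith
    have hxTb : |xT| ≤ DU := by
      refine abs_le_of_sq' _ _ hDU.le ?_
      have h1 : xT ^ 2 ≤ D₁ ^ 2 := by have := sq_nonneg yT; linarith [hC]
      have h2 : D₁ ^ 2 ≤ DU ^ 2 := pow_le_pow_left₀ hD₁0 hD₁m.2 2
      linarith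
    -- vertical estimate
    have hyy : (yv - yT) ^ 2 ≤ |yv ^ 2 - yT ^ 2| := by
      rcases le_total yv yT with h | h
      · have p : 0 ≤ yv * (yT - yv) := mul_nonneg hy.le (sub_nonneg.2 h)
        have q := neg_abs_le (yv ^ 2 - yT ^ 2)
        linarith [p, q]
      · have p : 0 ≤ yT * (yv - yT) := mul_nonneg hyT.le (sub_nonneg.2 h)
        have q := le_abs_self (yv ^ 2 - yT ^ 2)
        linarith [p, q]
    have hx2 : |x ^ 2 - xT ^ 2| ≤ (δ * M / DS) * M := by
      have e : x ^ 2 - xT ^ 2 = (x - xT) * (x + xT) := by ring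
      rw [e, abs_mul]
      have hxpx : |x + xT| ≤ M := (abs_add_le _ _).trans (by rw [hMdef]; linarith)
      exact mul_le_mul hx hxpx (abs_nonneg _) (by positivity)
    have hyyb : |yv ^ 2 - yT ^ 2| ≤ δ * M + (δ * M / DS) * M := by
      have e : yv ^ 2 - yT ^ 2 = (r₁ ^ 2 - D₁ ^ 2) - (x ^ 2 - xT ^ 2) := by
        linear_combination hC - hA
      rw [e, sub_eq_add_neg]
      exact (abs_add_le _ _).trans (by rw [abs_neg]; exact add_le_add h1 hx2)
    -- combine
    have hxsq : (x - xT) ^ 2 ≤ (δ * M / DS) ^ 2 := by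
      have := pow_le_pow_left₀ (abs_nonneg (x - xT)) hx 2
      rwa [sq_abs] at this
    have hE : ‖θ - θT‖ ^ 2 = (x - xT) ^ 2 + (yv - yT) ^ 2 := by
      rw [norm_sq_two']; simp [hsub, hxdef, hyvdef, hxTdef, hyTdef]
    have step : (δ * M / DS) ^ 2 + (δ * M + (δ * M / DS) * M) ≤
        M * (M / DS * (Υ / DS + 1) + 2) * δ := by
      have key : M * (M / DS * (Υ / DS + 1) + 2) * δ -
          ((δ * M / DS) ^ 2 + (δ * M + (δ * M / DS) * M)) =
          (Υ - δ) * δ * M ^ 2 * (1 / DS) ^ 2 + δ * M := by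
        field_simp
        ring
      have t1 : 0 ≤ (Υ - δ) * δ * M ^ 2 * (1 / DS) ^ 2 :=
        mul_nonneg (mul_nonneg (mul_nonneg (sub_nonneg.2 hδΥ) hδpos.le)
          (sq_nonneg M)) (sq_nonneg (1 / DS))
      have t2 : 0 ≤ δ * M := mul_nonneg hδpos.le hM0.le
      rw [← sub_nonneg, key]
      exact add_nonneg t1 t2
    have hd2 : ‖θ - θT‖ ^ 2 ≤ M * (M / DS * (Υ / DS + 1) + 2) * δ := by
      rw [hE]
      calc (x - xT) ^ 2 + (yv - yT) ^ 2
          ≤ (δ * M / DS) ^ 2 + (δ * M + (δ * M / DS) * M) := by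
            have := hyy.trans hyyb
            linarith
        _ ≤ _ := step
    have hA2 : (0:ℝ) ≤ M / DS * (Υ / DS + 1) + 2 := by positivity
    have hfin : ‖θ - θT‖ ≤ Real.sqrt (M * (M / DS * (Υ / DS + 1) + 2) * δ) := by
      have := Real.sqrt_le_sqrt hd2
      rwa [Real.sqrt_sq (norm_nonneg _)] at this
    rw [Real.sqrt_mul (mul_nonneg hM0.le hA2), Real.sqrt_mul hM0.le] at hfin
    rw [Metric.mem_closedBall, dist_eq_norm]
    exact hfin
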